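/- Let G be a finitely generated group, X̄ a compact space with G-action, F a virtually closed family of subgroups, and suppose I is an open F-cover of G × X̄ with (G,α)-multiplicity at most n+1. Define U = { B(V, α) | V ∈ I } where B(V,α) = { (h,x) | (B(h,α) × {x}) ∩ V ≠ ∅ }. Then U is an open G-invariant cover with G-Lebesgue number α, dimension at most n, and each member B(V,α) has stabiliser containing the stabiliser of V as a subgroup of index at most (n+1)!, hence all stabilisers of members of U belong to F. -/

import Mathlib

open Pointwise

/-- `B(V, α) = {(h,x) | (B(h,α) × {x}) ∩ V ≠ ∅}`. -/
def Bpos {G X : Type*} [MetricSpace G] (V : Set (G × X)) (α : ℝ) : Set (G × X) :=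
  {p : G × X | (((Metric.closedBall p.1 α) ×ˢ ({p.2} : Set X)) ∩ V).Nonempty}

lemma mem_Bpos {G X : Type*} [MetricSpace G] {V : Set (G × X)} {α : ℝ} {p : G × X} :
    p ∈ Bpos V α ↔ ∃ h : G, dist p.1 h ≤ α ∧ (h, p.2) ∈ V := by
  constructor
  · rintro ⟨⟨h, y⟩, ⟨hd, hy⟩, hv⟩
    simp only [Set.mem_singleton_iff] at hy
    exact ⟨h, by simpa [Metric.mem_closedBall, dist_comm] using hd, by subst hy; exact hv⟩
  · rintro ⟨h, hd, hv⟩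
    exact ⟨(h, p.2), ⟨by simpa [Metric.mem_closedBall, dist_comm] using hd, rfl⟩, hv⟩

lemma smul_Bpos {G X : Type*} [Group G] [MetricSpace G] [MulAction G X]
    (hinv : ∀ g h k : G, dist (g * h) (g * k) = dist h k)
    (g : G) (V : Set (G × X)) (α : ℝ) :
    g • Bpos V α = Bpos (g • V) α := by
  ext p
  rw [Set.mem_smul_set_iff_inv_smul_mem, mem_Bpos, mem_Bpos]
  constructor
  · rintro ⟨h, hd, hv⟩
    refine ⟨g * h, ?_, ?_⟩
    · have h2 := hinv g (g⁻¹ * p.1) h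
      rw [mul_inv_cancel_left] at h2
      rw [h2]; exact hd
    · rw [Set.mem_smul_set_iff_inv_smul_mem]
      simpa [Prod.smul_def, mul_assoc] using hv
  · rintro ⟨h, hd, hv⟩
    rw [Set.mem_smul_set_iff_inv_smul_mem] at hv
    refine ⟨g⁻¹ * h, ?_, ?_⟩
    · have h2 := hinv g⁻¹ p.1 h
      show dist (g⁻¹ * p.1) (g⁻¹ * h) ≤ α
      rw [h2]; exact hd
    · simpa [Prod.smul_def] using hv

/-- If `ℐ` is an open `F`-cover of `G × X̄` with `(G,α)`-multiplicity at most `n+1`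
(`F` virtually closed), then `𝒰 = {B(V,α) | V ∈ ℐ}` is an open `G`-invariant cover
with `G`-Lebesgue number `α` and dimension at most `n`, and for each nonempty `V ∈ ℐ`
the stabiliser of `B(V,α)` contains the stabiliser of `V` with index at most `(n+1)!`,
hence lies in `F`. -/
theorem stmt19 {G X : Type*} [Group G] [MetricSpace G] [DiscreteTopology G]
    [TopologicalSpace X] [CompactSpace X] [MulAction G X]
    (hinv : ∀ g h k : G, dist (g * h) (g * k) = dist h k)
    (hball : ∀ (g : G) (r : ℝ), (Metric.closedBall g r).Finite)
    (F : Set (Subgroup G))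
    (hconj : ∀ K ∈ F, ∀ g : G, (K.map (MulAut.conj g).toMonoidHom) ∈ F)
    (hsub : ∀ K ∈ F, ∀ K' : Subgroup G, K' ≤ K → K' ∈ F)
    (hvc : ∀ K ∈ F, ∀ K' : Subgroup G, K ≤ K' → K.relIndex K' ≠ 0 → K' ∈ F)
    (α : ℝ) (hα : 0 < α) (n : ℕ)
    (ℐ : Set (Set (G × X)))
    (hIopen : ∀ V ∈ ℐ, IsOpen V)
    (hIcover : ⋃₀ ℐ = Set.univ)
    (hIequiv : ∀ (g : G), ∀ V ∈ ℐ, g • V ∈ ℐ)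
    (hIFsubset : ∀ V ∈ ℐ, ∀ g : G, g • V = V ∨ Disjoint (g • V) V)
    (hIstab : ∀ V ∈ ℐ, MulAction.stabilizer G V ∈ F)
    (hmult : ∀ (g : G) (x : X),
      {V ∈ ℐ | (((Metric.closedBall g α) ×ˢ ({x} : Set X)) ∩ V).Nonempty}.encard
        ≤ (n + 1 : ℕ)) :
    ∀ 𝒰 : Set (Set (G × X)), 𝒰 = (fun V => Bpos V α) '' ℐ →
      (∀ W ∈ 𝒰, IsOpen W) ∧
      (⋃₀ 𝒰 = Set.univ) ∧
      (∀ (g : G), ∀ W ∈ 𝒰, g • W ∈ 𝒰) ∧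
      (∀ (g : G) (x : X), ∃ W ∈ 𝒰,
        (Metric.closedBall g α) ×ˢ ({x} : Set X) ⊆ W) ∧
      (∀ p : G × X, {W ∈ 𝒰 | p ∈ W}.encard ≤ (n + 1 : ℕ)) ∧
      (∀ V ∈ ℐ, V.Nonempty →
        MulAction.stabilizer G V ≤ MulAction.stabilizer G (Bpos V α) ∧
        (MulAction.stabilizer G V).relIndex (MulAction.stabilizer G (Bpos V α)) ≠ 0 ∧
        (MulAction.stabilizer G V).relIndex (MulAction.stabilizer G (Bpos V α))
          ≤ Nat.factorial (n + 1) ∧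
        MulAction.stabilizer G (Bpos V α) ∈ F) := by
  intro 𝒰 h𝒰
  subst h𝒰
  refine ⟨?_, ?_, ?_, ?_, ?_, ?_⟩
  · -- openness
    rintro W ⟨V, hV, rfl⟩
    have hrep : Bpos V α =
        ⋃ (g : G), ⋃ (h ∈ Metric.closedBall g α), ({g} : Set G) ×ˢ {x | (h, x) ∈ V} := by
      ext ⟨g, x⟩
      simp only [Set.mem_iUnion, Set.mem_prod, Set.mem_singleton_iff, Set.mem_setOf_eq,
        mem_Bpos, Metric.mem_closedBall]
      constructor
      · rintro ⟨h, hd, hv⟩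
        exact ⟨g, h, by rwa [dist_comm], rfl, hv⟩
      · rintro ⟨g', h, hd, rfl, hv⟩
        exact ⟨h, by rwa [dist_comm], hv⟩
    show IsOpen (Bpos V α)
    rw [hrep]
    refine isOpen_iUnion fun g => isOpen_iUnion fun h => isOpen_iUnion fun _ => ?_
    exact (isOpen_discrete _).prod ((hIopen V hV).preimage (Continuous.prodMk_right h))
  · -- cover
    apply Set.eq_univ_of_forall
    intro p
    have : p ∈ ⋃₀ ℐ := hIcover ▸ Set.mem_univ p
    obtain ⟨V, hV, hpV⟩ := this
    exact ⟨Bpos V α, ⟨V, hV, rfl⟩, mem_Bpos.mpr ⟨p.1, by simpa using hα.le, hpV⟩⟩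
  · -- invariance
    rintro g W ⟨V, hV, rfl⟩
    exact ⟨g • V, hIequiv g V hV, (smul_Bpos hinv g V α).symm⟩
  · -- Lebesgue
    intro g x
    have : (g, x) ∈ ⋃₀ ℐ := hIcover ▸ Set.mem_univ _
    obtain ⟨V, hV, hpV⟩ := this
    refine ⟨Bpos V α, ⟨V, hV, rfl⟩, ?_⟩
    rintro ⟨h, y⟩ ⟨hd, hy⟩
    simp only [Set.mem_singleton_iff] at hy
    subst hy
    exact mem_Bpos.mpr ⟨g, by simpa [dist_comm] using hd, hpV⟩
  · -- multiplicity
    intro p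
    have hsubs : {W ∈ (fun V => Bpos V α) '' ℐ | p ∈ W} ⊆
        (fun V => Bpos V α) ''
          {V ∈ ℐ | (((Metric.closedBall p.1 α) ×ˢ ({p.2} : Set X)) ∩ V).Nonempty} := by
      rintro W ⟨⟨V, hV, rfl⟩, hp⟩
      exact ⟨V, ⟨hV, hp⟩, rfl⟩
    calc {W ∈ (fun V => Bpos V α) '' ℐ | p ∈ W}.encard
        ≤ ((fun V => Bpos V α) ''
            {V ∈ ℐ | (((Metric.closedBall p.1 α) ×ˢ ({p.2} : Set X)) ∩ V).Nonempty}).encard :=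
          Set.encard_mono hsubs
      _ ≤ _ := Set.encard_image_le _ _
      _ ≤ (n + 1 : ℕ) := hmult p.1 p.2
  · -- stabilisers
    intro V hV hVne
    set H := MulAction.stabilizer G V with hH
    set H' := MulAction.stabilizer G (Bpos V α) with hH'
    have hle : H ≤ H' := by
      intro g hg
      rw [MulAction.mem_stabilizer_iff] at hg ⊢
      rw [smul_Bpos hinv, hg]
    obtain ⟨⟨h, x⟩, hpV⟩ := hVne
    set 𝒮 := {V' ∈ ℐ | (((Metric.closedBall h α) ×ˢ ({x} : Set X)) ∩ V').Nonempty} with h𝒮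
    have hfin : 𝒮.Finite := by
      rw [← Set.encard_lt_top_iff]
      exact lt_of_le_of_lt (hmult h x) (WithTop.coe_lt_top _)
    have hp0 : (h, x) ∈ Bpos V α := mem_Bpos.mpr ⟨h, by simpa using hα.le, hpV⟩
    have hmem : ∀ g : ↥H', ((g : G) • V) ∈ 𝒮 := by
      intro g
      refine ⟨hIequiv g V hV, ?_⟩
      have heq : Bpos ((g : G) • V) α = Bpos V α := by
        rw [← smul_Bpos hinv, g.2]
      have : (h, x) ∈ Bpos ((g : G) • V) α := heq ▸ hp0
      exact this
    set K : Subgroup ↥H' := H.subgroupOf H' with hK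
    set φ : ↥H' → ↥𝒮 := fun g => ⟨(g : G) • V, hmem g⟩ with hφ
    have hco : ∀ g₁ g₂ : ↥H', φ g₁ = φ g₂ ↔ g₁⁻¹ * g₂ ∈ K := by
      intro g₁ g₂
      rw [hK, Subgroup.mem_subgroupOf, hH, MulAction.mem_stabilizer_iff]
      have hcoe : ((g₁⁻¹ * g₂ : ↥H') : G) = (g₁ : G)⁻¹ * (g₂ : G) := rfl
      rw [hcoe, ← smul_smul, inv_smul_eq_iff]
      constructor
      · intro hEq
        exact congrArg Subtype.val hEq |>.symm
      · intro hEq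
        exact Subtype.ext hEq.symm
    set f : ↥H' ⧸ K → ↥𝒮 :=
      Quotient.lift φ (fun a b hab => (hco a b).mpr (QuotientGroup.leftRel_apply.mp hab))
      with hf
    have hfinj : Function.Injective f := by
      intro q₁ q₂
      induction q₁ using Quotient.inductionOn
      induction q₂ using Quotient.inductionOn
      intro hEq
      exact Quotient.sound (QuotientGroup.leftRel_apply.mpr ((hco _ _).mp hEq))
    have : Finite ↥𝒮 := hfin.to_subtype
    have hQfin : Finite (↥H' ⧸ K) := Finite.of_injective f hfinj
    have hcard : Nat.card (↥H' ⧸ K) ≤ n + 1 := by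
      have h1 : Nat.card (↥H' ⧸ K) ≤ Nat.card ↥𝒮 := Nat.card_le_card_of_injective f hfinj
      have h2 : Nat.card ↥𝒮 = 𝒮.ncard := (Nat.card_coe_set_eq 𝒮)
      have h3 : 𝒮.ncard ≤ n + 1 := by
        have := hmult h x
        rw [Set.ncard_eq_toFinset_card 𝒮 hfin]
        rw [← h𝒮, hfin.encard_eq_coe_toFinset_card, Nat.cast_le] at this
        exact this
      omega
    have hrel : H.relIndex H' = Nat.card (↥H' ⧸ K) := rfl
    have hne : H.relIndex H' ≠ 0 := by
      rw [hrel]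
      exact Nat.card_pos.ne'
    refine ⟨hle, hne, ?_, hvc H (hIstab V hV) H' hle hne⟩
    rw [hrel]
    exact hcard.trans ((Nat.self_le_factorial (n + 1)))
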